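/- Let F : ℝ⁷ → ℝ⁴ be the linear map F(x₁,x₂,x₃,y₁,y₂,y₃,z) = ((x₁+y₁)/√2, (x₂+y₂)/√2, (x₃+y₃)/√2, (x₃−y₃)/√2), where ℝ⁷ and ℝ⁴ carry the standard Euclidean inner products, and let φ(x₁,x₂,x₃,y₁,y₂,y₃,z) = (y₁,y₂,y₃,−x₁,−x₂,−x₃,0) and ξ = (0,0,0,0,0,0,1) be the standard almost contact structure of Example 1 with n = 3. Then: (i) F is surjective; (ii) ker F = span{(1,0,0,−1,0,0,0), (0,1,0,0,−1,0,0), (0,0,0,0,0,0,1)}; (iii) ‖F(X)‖ = ‖X‖ for every X ∈ (ker F)^⊥, so F is a Riemannian submersion; (iv) the image of ker F under φ is contained in (ker F)^⊥ but is not equal to (ker F)^⊥; and (v) ξ ∈ ker F. Hence F is an anti-invariant Riemannian submersion with vertical ξ whose horizontal space strictly contains φ(ker F) (Example 5). -/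

import Mathlib

noncomputable section

@[simp] lemma my_cons_val_five {α : Type*} (a b c d e f g : α) : ![a,b,c,d,e,f,g] 5 = f := rfl
@[simp] lemma my_cons_val_six {α : Type*} (a b c d e f g : α) : ![a,b,c,d,e,f,g] 6 = g := rfl

lemma my_mem_orth_span {E : Type*} [NormedAddCommGroup E] [InnerProductSpace ℝ E]
    (S : Set E) (x : E) (h : ∀ g ∈ S, inner ℝ g x = (0 : ℝ)) :
    x ∈ (Submodule.span ℝ S)ᗮ := by
  rw [Submodule.mem_orthogonal]
  intro u hu
  induction hu using Submodule.span_induction with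
  | mem g hg => exact h g hg
  | zero => simp
  | add a b _ _ ha hb => simp [inner_add_left, ha, hb]
  | smul r a _ ha => simp [inner_smul_left, ha]


/-- The linear map
`F(x₁,x₂,x₃,y₁,y₂,y₃,z) = ((x₁+y₁)/√2, (x₂+y₂)/√2, (x₃+y₃)/√2, (x₃−y₃)/√2)` of
Example 5, with coordinates `(x₁,x₂,x₃,y₁,y₂,y₃,z) = (v 0, …, v 6)`. -/
def F12 : EuclideanSpace ℝ (Fin 7) →ₗ[ℝ] EuclideanSpace ℝ (Fin 4) :=
  Matrix.toEuclideanLin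
    !![1 / Real.sqrt 2, 0, 0, 1 / Real.sqrt 2, 0, 0, 0;
       0, 1 / Real.sqrt 2, 0, 0, 1 / Real.sqrt 2, 0, 0;
       0, 0, 1 / Real.sqrt 2, 0, 0, 1 / Real.sqrt 2, 0;
       0, 0, 1 / Real.sqrt 2, 0, 0, -(1 / Real.sqrt 2), 0]

/-- The linear map `φ(x₁,x₂,x₃,y₁,y₂,y₃,z) = (y₁,y₂,y₃,−x₁,−x₂,−x₃,0)` of Example 1
with `n = 3`. -/
def phi12 : EuclideanSpace ℝ (Fin 7) →ₗ[ℝ] EuclideanSpace ℝ (Fin 7) :=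
  Matrix.toEuclideanLin
    !![0, 0, 0, 1, 0, 0, 0;
       0, 0, 0, 0, 1, 0, 0;
       0, 0, 0, 0, 0, 1, 0;
       -1, 0, 0, 0, 0, 0, 0;
       0, -1, 0, 0, 0, 0, 0;
       0, 0, -1, 0, 0, 0, 0;
       0, 0, 0, 0, 0, 0, 0]

/-- The characteristic vector `ξ = (0,0,0,0,0,0,1)`. -/
def xi12 : EuclideanSpace ℝ (Fin 7) := !₂[0, 0, 0, 0, 0, 0, 1]

set_option maxHeartbeats 2000000 in
/-- Example 5: `F` is an anti-invariant Riemannian submersion from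
`ℝ⁷` with its standard cosymplectic structure, with vertical `ξ` and
`φ(ker F) ⊊ (ker F)^⊥`. -/
theorem example5_anti_invariant_submersion_proper_horizontal :
    (∀ v : EuclideanSpace ℝ (Fin 7),
      F12 v = ![(v 0 + v 3) / Real.sqrt 2, (v 1 + v 4) / Real.sqrt 2,
        (v 2 + v 5) / Real.sqrt 2, (v 2 - v 5) / Real.sqrt 2]) ∧
    (∀ v : EuclideanSpace ℝ (Fin 7),
      phi12 v = ![v 3, v 4, v 5, -v 0, -v 1, -v 2, 0]) ∧
    Function.Surjective F12 ∧
    LinearMap.ker F12 = Submodule.span ℝ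
      {(!₂[1, 0, 0, -1, 0, 0, 0] : EuclideanSpace ℝ (Fin 7)),
        !₂[0, 1, 0, 0, -1, 0, 0], !₂[0, 0, 0, 0, 0, 0, 1]} ∧
    (∀ X ∈ (LinearMap.ker F12)ᗮ, ‖F12 X‖ = ‖X‖) ∧
    (LinearMap.ker F12).map phi12 ≤ (LinearMap.ker F12)ᗮ ∧
    (LinearMap.ker F12).map phi12 ≠ (LinearMap.ker F12)ᗮ ∧
    xi12 ∈ LinearMap.ker F12 := by
  have h2 : Real.sqrt 2 ≠ 0 := by positivity
  have hsq : Real.sqrt 2 ^ 2 = 2 := Real.sq_sqrt (by norm_num)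
  have hF : ∀ v : EuclideanSpace ℝ (Fin 7),
      F12 v = ![(v 0 + v 3) / Real.sqrt 2, (v 1 + v 4) / Real.sqrt 2,
        (v 2 + v 5) / Real.sqrt 2, (v 2 - v 5) / Real.sqrt 2] := by
    intro v
    funext i
    rw [F12, Matrix.toEuclideanLin_apply]
    fin_cases i <;>
      simp [Matrix.mulVec, dotProduct, Fin.sum_univ_seven] <;> ring
  have hphi : ∀ v : EuclideanSpace ℝ (Fin 7),
      phi12 v = ![v 3, v 4, v 5, -v 0, -v 1, -v 2, 0] := by
    intro v
    funext i
    rw [phi12, Matrix.toEuclideanLin_apply]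
    fin_cases i <;>
      simp [Matrix.mulVec, dotProduct, Fin.sum_univ_seven]
  set g1 : EuclideanSpace ℝ (Fin 7) := !₂[1, 0, 0, -1, 0, 0, 0] with hg1
  set g2 : EuclideanSpace ℝ (Fin 7) := !₂[0, 1, 0, 0, -1, 0, 0] with hg2
  set g3 : EuclideanSpace ℝ (Fin 7) := !₂[0, 0, 0, 0, 0, 0, 1] with hg3
  have hm1 : g1 ∈ ({g1, g2, g3} : Set (EuclideanSpace ℝ (Fin 7))) := by left; rfl
  have hm2 : g2 ∈ ({g1, g2, g3} : Set (EuclideanSpace ℝ (Fin 7))) := by right; left; rfl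
  have hm3 : g3 ∈ ({g1, g2, g3} : Set (EuclideanSpace ℝ (Fin 7))) := by right; right; rfl
  have hker : LinearMap.ker F12 = Submodule.span ℝ ({g1, g2, g3} : Set (EuclideanSpace ℝ (Fin 7))) := by
    apply le_antisymm
    · intro v hv
      have hv0 := hF v
      rw [show F12 v = 0 from hv, WithLp.ofLp_zero] at hv0
      symm at hv0
      have e0 : (v 0 + v 3) / Real.sqrt 2 = 0 := by
        have := congrFun hv0 0; simpa using this
      have e1 : (v 1 + v 4) / Real.sqrt 2 = 0 := by
        have := congrFun hv0 1; simpa using this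
      have e2 : (v 2 + v 5) / Real.sqrt 2 = 0 := by
        have := congrFun hv0 2; simpa using this
      have e3 : (v 2 - v 5) / Real.sqrt 2 = 0 := by
        have := congrFun hv0 3; simpa using this
      rw [div_eq_zero_iff] at e0 e1 e2 e3
      have E0 : v 0 + v 3 = 0 := e0.resolve_right h2
      have E1 : v 1 + v 4 = 0 := e1.resolve_right h2
      have E2 : v 2 + v 5 = 0 := e2.resolve_right h2
      have E3 : v 2 - v 5 = 0 := e3.resolve_right h2
      have hv' : v = v 0 • g1 + v 1 • g2 + v 6 • g3 := by
        ext i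
        have hadd : (v 0 • g1 + v 1 • g2 + v 6 • g3) i
            = v 0 * g1 i + v 1 * g2 i + v 6 * g3 i := rfl
        rw [hadd]
        fin_cases i <;> simp [hg1, hg2, hg3] <;> linarith
      rw [hv']
      exact Submodule.add_mem _
        (Submodule.add_mem _
          (Submodule.smul_mem _ _ (Submodule.subset_span hm1))
          (Submodule.smul_mem _ _ (Submodule.subset_span hm2)))
        (Submodule.smul_mem _ _ (Submodule.subset_span hm3))
    · rw [Submodule.span_le]
      rintro g (rfl | rfl | rfl) <;>
      · show F12 _ = 0
        ext i
        rw [hF]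
        fin_cases i <;> simp [hg1, hg2, hg3]
  refine ⟨hF, hphi, ?_, hker, ?_, ?_, ?_, ?_⟩
  · -- surjectivity
    intro w
    refine ⟨(!₂[Real.sqrt 2 * w 0, Real.sqrt 2 * w 1, Real.sqrt 2 * (w 2 + w 3) / 2,
        0, 0, Real.sqrt 2 * (w 2 - w 3) / 2, 0] : EuclideanSpace ℝ (Fin 7)), ?_⟩
    have hw : w = !₂[w 0, w 1, w 2, w 3] := by
      ext i; fin_cases i <;> rfl
    ext i
    rw [hF]
    fin_cases i <;>
      · simp only [Fin.zero_eta, Fin.mk_one, show (⟨2, by omega⟩ : Fin 4) = 2 from rfl,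
          show (⟨3, by omega⟩ : Fin 4) = 3 from rfl, Matrix.cons_val_zero,
          Matrix.cons_val_one, Matrix.head_cons, Matrix.cons_val_two, Matrix.tail_cons,
          Matrix.cons_val_three, Matrix.cons_val_four, my_cons_val_five, my_cons_val_six,
          WithLp.ofLp_toLp]
        rw [div_eq_iff h2]
        nlinarith [hsq]
  · -- isometry on horizontal
    intro X hX
    rw [hker, Submodule.mem_orthogonal] at hX
    have i1 : X 0 = X 3 := by
      have := hX g1 (Submodule.subset_span hm1)
      simp [hg1, PiLp.inner_apply, Fin.sum_univ_seven, RCLike.inner_apply] at this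
      linarith
    have i2 : X 1 = X 4 := by
      have := hX g2 (Submodule.subset_span hm2)
      simp [hg2, PiLp.inner_apply, Fin.sum_univ_seven, RCLike.inner_apply] at this
      linarith
    have i3 : X 6 = 0 := by
      have := hX g3 (Submodule.subset_span hm3)
      simpa [hg3, PiLp.inner_apply, Fin.sum_univ_seven, RCLike.inner_apply] using this
    rw [EuclideanSpace.norm_eq, EuclideanSpace.norm_eq, hF X]
    congr 1
    simp only [Fin.sum_univ_four, Fin.sum_univ_seven, Real.norm_eq_abs, sq_abs,
      Matrix.cons_val_zero, Matrix.cons_val_one, Matrix.head_cons, Matrix.cons_val_two,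
      Matrix.tail_cons, Matrix.cons_val_three, my_cons_val_five, my_cons_val_six,
      Matrix.cons_val_four]
    rw [div_pow, div_pow, div_pow, div_pow, hsq, i1, i2, i3]
    ring
  · -- map phi ker ≤ kerᗮ
    rw [hker, Submodule.map_span, Submodule.span_le]
    rintro _ ⟨g, (rfl | rfl | rfl), rfl⟩ <;>
    · apply my_mem_orth_span
      rintro u (rfl | rfl | rfl) <;>
      · simp only [hphi, WithLp.ofLp_toLp, hg1, hg2, hg3, PiLp.inner_apply, Fin.sum_univ_seven, RCLike.inner_apply,
          conj_trivial, Matrix.cons_val_zero, Matrix.cons_val_one, Matrix.head_cons,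
          Matrix.cons_val_two, Matrix.tail_cons, Matrix.cons_val_three,
          Matrix.cons_val_four, my_cons_val_five, my_cons_val_six]
        ring
  · -- not equal
    intro heq
    set e : EuclideanSpace ℝ (Fin 7) := !₂[0, 0, 1, 0, 0, 0, 0] with he
    have hmem : e ∈ (LinearMap.ker F12)ᗮ := by
      rw [hker]
      apply my_mem_orth_span
      rintro u (rfl | rfl | rfl) <;>
      · simp only [WithLp.ofLp_toLp, he, hg1, hg2, hg3, PiLp.inner_apply, Fin.sum_univ_seven,
          RCLike.inner_apply, conj_trivial, Matrix.cons_val_zero, Matrix.cons_val_one,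
          Matrix.head_cons, Matrix.cons_val_two, Matrix.tail_cons, Matrix.cons_val_three,
          Matrix.cons_val_four, my_cons_val_five, my_cons_val_six]
        ring
    rw [← heq] at hmem
    obtain ⟨u, hu, hue⟩ := hmem
    rw [hker] at hu
    have h5' : ∀ x, x ∈ Submodule.span ℝ ({g1, g2, g3} : Set (EuclideanSpace ℝ (Fin 7))) →
        x 5 = 0 := by
      intro x hx
      induction hx using Submodule.span_induction with
      | mem g hg => rcases hg with rfl | rfl | rfl <;> simp [hg1, hg2, hg3]
      | zero => rfl
      | add a b _ _ ha hb =>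
        have : (a + b) 5 = a 5 + b 5 := rfl
        rw [this, ha, hb, add_zero]
      | smul r a _ ha =>
        have : (r • a) 5 = r * a 5 := rfl
        rw [this, ha, mul_zero]
    have h5 : u 5 = 0 := h5' u hu
    have h52 : (phi12 u) 2 = u 5 := by rw [hphi u]; rfl
    have h53 : (phi12 u) 2 = e 2 := by rw [hue]
    rw [h52, h5] at h53
    simp [he] at h53
  · -- xi in ker
    show F12 xi12 = 0
    ext i
    rw [hF]
    fin_cases i <;> simp [xi12]

end
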